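/- If f ∈ C(𝕋) and E ⊆ 𝕋 is a compact set such that {sₙf|_E : n ∈ ℕ} is dense in C(E), then E has Lebesgue measure zero. -/

import Mathlib

open MeasureTheory Complex Filter Topology Set TopologicalSpace

noncomputable section

instance : Fact (0 < 2 * Real.pi) := ⟨by positivity⟩

/-- The unit circle ℝ/2πℤ. -/
abbrev UnitCircle := AddCircle (2 * Real.pi)

/-- The n-th partial sum of the Fourier series of `f`. -/
noncomputable def partialSum (n : ℕ) (f : UnitCircle → ℂ) : C(UnitCircle, ℂ) :=
  ∑ k ∈ Finset.Icc (-(n : ℤ)) (n : ℤ), fourierCoeff f k • fourier k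

/-- If the restrictions `{sₙ f |_E : n ∈ ℕ}` are dense in `C(E)` for a compact `E` and
continuous `f`, then `E` has Lebesgue (Haar) measure zero. -/
theorem stmt14 (f : C(UnitCircle, ℂ)) (E : Set UnitCircle) (hE : IsCompact E)
    (hdense : Dense (Set.range fun n => (partialSum n ⇑f).restrict E)) :
    AddCircle.haarAddCircle E = 0 := by
  classical
  by_contra hne
  haveI : CompactSpace E := isCompact_iff_compactSpace.mp hE
  set μ : Measure UnitCircle := AddCircle.haarAddCircle with hμdef
  set F : Lp ℂ 2 μ := ContinuousMap.toLp (E := ℂ) 2 μ ℂ f with hFdef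
  have hcoef : ∀ k : ℤ, fourierCoeff (⇑f) k = @inner ℂ _ _ (fourierLp 2 k) F := by
    intro k
    rw [← fourierCoeff_toLp f k, ← fourierBasis_repr,
      fourierBasis.repr_apply_apply, coe_fourierBasis]
  -- Bessel-type uniform bound on the L² mass of the partial sums
  have key : ∀ n : ℕ, ∫ x, ‖partialSum n (⇑f) x‖ ^ 2 ∂μ ≤ ‖F‖ ^ 2 := by
    intro n
    set g : C(UnitCircle, ℂ) := partialSum n (⇑f) with hgdef
    set Sn : Lp ℂ 2 μ := ContinuousMap.toLp (E := ℂ) 2 μ ℂ g with hSdef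
    have hSn : Sn = ∑ k ∈ Finset.Icc (-(n : ℤ)) (n : ℤ),
        fourierCoeff (⇑f) k • fourierLp 2 k := by
      rw [hSdef, hgdef]
      unfold partialSum
      rw [map_sum]
      simp [fourierLp]
      rfl
    have hint : Integrable (fun x => @inner ℂ ℂ _ (g x) (g x)) μ := by
      refine Continuous.integrable_of_hasCompactSupport
        (g.continuous.inner g.continuous) ?_
      exact HasCompactSupport.of_compactSpace _
    have h1 : ∫ x, ‖g x‖ ^ 2 ∂μ = ‖Sn‖ ^ 2 := by
      have hae : (⇑Sn) =ᵐ[μ] ⇑g := ContinuousMap.coeFn_toLp μ g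
      have e1 : ∫ x, ‖g x‖ ^ 2 ∂μ = ∫ x, RCLike.re (@inner ℂ ℂ _ (g x) (g x)) ∂μ := by
        congr 1; ext x; rw [inner_self_eq_norm_sq]
      rw [e1, integral_re hint, ← inner_self_eq_norm_sq (𝕜 := ℂ),
        MeasureTheory.L2.inner_def]
      congr 1
      exact integral_congr_ae (by filter_upwards [hae] with x hx; rw [hx])
    have h2 : ‖Sn‖ ^ 2 ≤ ‖F‖ ^ 2 := by
      have e2 : ‖Sn‖ ^ 2 = ∑ k ∈ Finset.Icc (-(n : ℤ)) (n : ℤ),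
          ‖@inner ℂ _ _ (fourierLp 2 k) F‖ ^ 2 := by
        rw [← inner_self_eq_norm_sq (𝕜 := ℂ), hSn]
        rw [orthonormal_fourier.inner_sum (fun k => fourierCoeff (⇑f) k)
          (fun k => fourierCoeff (⇑f) k) _]
        rw [map_sum]
        refine Finset.sum_congr rfl fun k _ => ?_
        rw [hcoef k, RCLike.conj_mul]
        norm_cast
      rw [e2]
      exact orthonormal_fourier.sum_inner_products_le F
    rw [← hgdef] at *
    rw [h1]; exact h2
  -- density step
  have hstep : ∀ t : ℝ, 0 ≤ t → ∃ n : ℕ, ∀ x ∈ E, t ≤ ‖partialSum n (⇑f) x‖ := by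
    intro t ht
    set c : ℝ := ‖f‖ + t + 1 with hcdef
    set g0 : C(E, ℂ) := f.restrict E + ContinuousMap.const E (c : ℂ) with hg0
    obtain ⟨-, ⟨⟨n, rfl⟩, hd⟩⟩ := Metric.mem_closure_iff.mp (hdense g0) 1 one_pos
    refine ⟨n, fun x hx => ?_⟩
    have h1 : dist (g0 ⟨x, hx⟩) ((partialSum n ⇑f).restrict E ⟨x, hx⟩)
        ≤ dist g0 ((partialSum n ⇑f).restrict E) := ContinuousMap.dist_apply_le_dist _
    have h1' : ‖f x + (c : ℂ) - partialSum n (⇑f) x‖ < 1 := by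
      have : g0 ⟨x, hx⟩ = f x + (c : ℂ) := by simp [hg0, ContinuousMap.restrict_apply]
      rw [dist_eq_norm] at h1
      simp only [this, ContinuousMap.restrict_apply] at h1
      exact lt_of_le_of_lt h1 hd
    have hA : ‖f x + (c : ℂ)‖ ≤ ‖f x + (c : ℂ) - partialSum n (⇑f) x‖
        + ‖partialSum n (⇑f) x‖ := by
      simpa using norm_add_le (f x + (c : ℂ) - partialSum n (⇑f) x) (partialSum n (⇑f) x)
    have hC : ‖(c : ℂ)‖ ≤ ‖f x + (c : ℂ)‖ + ‖f x‖ := by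
      simpa using norm_add_le (f x + (c : ℂ)) (-(f x))
    have hD : ‖f x‖ ≤ ‖f‖ := f.norm_coe_le_norm x
    have hc : ‖(c : ℂ)‖ = c := by
      rw [Complex.norm_real]; exact Real.norm_of_nonneg (by positivity)
    rw [hc] at hC
    linarith
  -- conclusion
  have hfin : μ E ≠ ⊤ := measure_ne_top μ E
  set a : ℝ := (μ E).toReal with hadef
  have ha : 0 < a := ENNReal.toReal_pos hne hfin
  set t : ℝ := Real.sqrt (‖F‖ ^ 2 / a + 1) with htdef
  have ht0 : 0 ≤ t := Real.sqrt_nonneg _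
  obtain ⟨n, hn⟩ := hstep t ht0
  set g : C(UnitCircle, ℂ) := partialSum n (⇑f) with hgdef
  have hgint : Integrable (fun x => ‖g x‖ ^ 2) μ := by
    refine Continuous.integrable_of_hasCompactSupport
      (g.continuous.norm.pow 2) (HasCompactSupport.of_compactSpace _)
  have hlow : t ^ 2 * a ≤ ∫ x, ‖g x‖ ^ 2 ∂μ := by
    calc t ^ 2 * a ≤ ∫ x in E, ‖g x‖ ^ 2 ∂μ := by
          refine le_trans (le_of_eq ?_) (setIntegral_ge_of_const_le_real (c := t ^ 2) hE.measurableSet hfin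
            (fun x hx => ?_) hgint.integrableOn)
          · rfl
          have := hn x hx
          nlinarith [norm_nonneg (g x)]
      _ ≤ ∫ x, ‖g x‖ ^ 2 ∂μ :=
          setIntegral_le_integral hgint (Eventually.of_forall fun x => by positivity)
  have hub := key n
  have hsq : t ^ 2 = ‖F‖ ^ 2 / a + 1 := Real.sq_sqrt (by positivity)
  have heq : t ^ 2 * a = ‖F‖ ^ 2 + a := by
    rw [hsq]; field_simp
  rw [heq] at hlow
  rw [← hgdef] at hub
  linarith
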